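/- For every m ≥ 3, S^d_min(DL²_m) ≥ 2^{m−2} − 1, where DL²_m is the class of Boolean functions over {0,1}^m representable by 1-decision lists with at most 2 label alternations and d is the Hamming distance. -/

import Mathlib

open scoped NNReal

/-- The interaction game for learning from a contrast oracle:
`Identifiable pt CS n V` holds iff the learner can guarantee, within at most `n` rounds,
that the version space (starting from `V`) becomes a singleton `{C*}` (i.e. a subsingleton,
since the target always stays in the version space), against every target `C* ∈ V` and
every adversarial choice of contrastive examples from the contrast set `CS`.
A query has type `Q`; `pt q` is the instance whose label is returned; `CS q C V` is the
contrast set of the query `q` w.r.t. concept `C` and current version space `V`. -/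
def Identifiable {X Q : Type*} (pt : Q → X)
    (CS : Q → (X → Bool) → Set (X → Bool) → Set X) :
    ℕ → Set (X → Bool) → Prop
  | 0, V => V.Subsingleton
  | n + 1, V =>
      V.Subsingleton ∨
        ∃ q : Q, ∀ Cstar ∈ V,
          ((CS q Cstar V = ∅ →
            Identifiable pt CS n
              {C ∈ V | C (pt q) = Cstar (pt q) ∧ CS q C V = ∅}) ∧
          (∀ x' ∈ CS q Cstar V,
            Identifiable pt CS n
              {C ∈ V | C (pt q) = Cstar (pt q) ∧ x' ∈ CS q C V ∧ C x' = Cstar x'}))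

/-- The contrast sample complexity of class `𝓒` (as an extended natural number):
the least `n` such that some learner identifies every target within `n` rounds. -/
noncomputable def sampleComplexity {X Q : Type*} (pt : Q → X)
    (CS : Q → (X → Bool) → Set (X → Bool) → Set X) (𝓒 : Set (X → Bool)) : ℕ∞ :=
  sInf {n : ℕ∞ | ∃ k : ℕ, n = (k : ℕ∞) ∧ Identifiable pt CS k 𝓒}

/-- Minimum-distance contrast set: points of opposite label at minimal `d`-distance. -/
def CSmin {X : Type*} (d : X → X → ℝ≥0) (x : X) (C : X → Bool) : Set X :=
  {x' | C x' ≠ C x ∧ ∀ x'' : X, C x'' ≠ C x → d x x' ≤ d x x''}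

/-- Sample complexity in the minimum-distance model. -/
noncomputable def Smin {X : Type*} (d : X → X → ℝ≥0) (𝓒 : Set (X → Bool)) : ℕ∞ :=
  sampleComplexity (id : X → X) (fun x C _ => CSmin d x C) 𝓒

/-- Proximity contrast set: points of opposite label within distance `r` of `x`. -/
def CSprox {X : Type*} (d : X → X → ℝ≥0) (x : X) (r : ℝ≥0) (C : X → Bool) : Set X :=
  {x' | C x' ≠ C x ∧ d x x' ≤ r}

/-- Sample complexity in the proximity model (queries are pairs `(x, r)`). -/
noncomputable def Sprox {X : Type*} (d : X → X → ℝ≥0) (𝓒 : Set (X → Bool)) : ℕ∞ :=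
  sampleComplexity (Prod.fst : X × ℝ≥0 → X) (fun q C _ => CSprox d q.1 q.2 C) 𝓒

/-- Membership-query complexity: the contrast sets are always empty,
so the oracle only ever returns the label of the queried point. -/
noncomputable def SMQ {X : Type*} (𝓒 : Set (X → Bool)) : ℕ∞ :=
  sampleComplexity (id : X → X) (fun _ _ _ => (∅ : Set X)) 𝓒

/-- Evaluation of a 1-decision list.  An item `((i, p), b)` stands for the pair
`(ℓ, b)` where the literal `ℓ` is `v_i` if `p = true` and `¬v_i` if `p = false`;
the final `Bool` is the default label `b_{z+1}`. -/
def evalDL {m : ℕ} : List ((Fin m × Bool) × Bool) → Bool → (Fin m → Bool) → Bool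
  | [], bd, _ => bd
  | item :: rest, bd, a => if a item.1.1 = item.1.2 then item.2 else evalDL rest bd a

/-- The number of label alternations in a list of labels: the number of adjacent
unequal pairs. -/
def countAlt : List Bool → ℕ
  | a :: b :: rest => (if a ≠ b then 1 else 0) + countAlt (b :: rest)
  | _ => 0

/-- `DL^k_m`: Boolean functions over `{0,1}^m` representable by a 1-decision list in
which every variable occurs at most once and with at most `k` label alternations
(counted over the labels `b_1, …, b_z, b_{z+1}` including the default). -/
def DLk (m k : ℕ) : Set ((Fin m → Bool) → Bool) :=
  {C | ∃ (items : List ((Fin m × Bool) × Bool)) (bd : Bool),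
    (items.map fun t => t.1.1).Nodup ∧
    countAlt (items.map Prod.snd ++ [bd]) ≤ k ∧
    C = evalDL items bd}

section Aux

variable {m : ℕ} [NeZero m]

/-- The hard concepts: halfspace `x 0` plus a hidden singleton `a`. -/
def Ca (a : Fin m → Bool) : (Fin m → Bool) → Bool :=
  fun x => x 0 || decide (x = a)

/-- Flip coordinate 0. -/
def flip0 (x : Fin m → Bool) : Fin m → Bool := Function.update x 0 (!x 0)

lemma flip0_zero (x : Fin m → Bool) : flip0 x 0 = !x 0 := by
  simp [flip0]

lemma flip0_ne (x : Fin m → Bool) : flip0 x ≠ x := by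
  intro h
  have := congrFun h 0
  rw [flip0_zero] at this
  cases x 0 <;> simp_all

lemma hammingDist_flip0 (x : Fin m → Bool) : hammingDist x (flip0 x) ≤ 1 := by
  unfold hammingDist
  calc (Finset.filter (fun i => x i ≠ flip0 x i) Finset.univ).card
      ≤ ({0} : Finset (Fin m)).card := by
        apply Finset.card_le_card
        intro i hi
        simp only [Finset.mem_filter, Finset.mem_univ, true_and] at hi
        simp only [Finset.mem_singleton]
        by_contra hne
        exact hi ((Function.update_of_ne hne _ _).symm)
    _ = 1 := by simp

/-- The Hamming distance function as used in the statement. -/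
noncomputable def dH : (Fin m → Bool) → (Fin m → Bool) → ℝ≥0 :=
  fun a b => ((hammingDist a b : ℕ) : ℝ≥0)

lemma flip0_mem_CSmin (C : (Fin m → Bool) → Bool) (x : Fin m → Bool)
    (h : C (flip0 x) ≠ C x) : flip0 x ∈ CSmin dH x C := by
  refine ⟨h, fun x'' hx'' => ?_⟩
  have hne : x'' ≠ x := fun he => hx'' (by rw [he])
  have h1 : (1 : ℕ) ≤ hammingDist x x'' := by
    have := hammingDist_pos.mpr (Ne.symm hne)
    omega
  unfold dH
  have := hammingDist_flip0 x
  exact_mod_cast le_trans (Nat.cast_le.mpr this) (Nat.cast_le.mpr h1)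

lemma Ca_inj {a b : Fin m → Bool} (ha : a 0 = false) (hb : b 0 = false)
    (h : Ca a = Ca b) : a = b := by
  by_contra hne
  have := congrFun h a
  simp [Ca, ha, hne] at this

/-- Key adversary lemma: if the version space contains `Ca a` for all `a ∈ S`
(with `a 0 = false`), identification in `k` rounds forces `|S| ≤ k + 1`. -/
lemma key : ∀ (k : ℕ) (S : Finset (Fin m → Bool)) (V : Set ((Fin m → Bool) → Bool)),
    (∀ a ∈ S, a 0 = false) → (∀ a ∈ S, Ca a ∈ V) →
    Identifiable (id : (Fin m → Bool) → (Fin m → Bool))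
      (fun x C _ => CSmin dH x C) k V →
    S.card ≤ k + 1 := by
  intro k
  induction k with
  | zero =>
    intro S V hS hV hid
    -- V is a subsingleton
    by_contra hc
    push_neg at hc
    obtain ⟨a, ha, b, hb, hab⟩ : ∃ a ∈ S, ∃ b ∈ S, a ≠ b := by
      rcases Finset.one_lt_card.mp (by omega : 1 < S.card) with ⟨a, ha, b, hb, hab⟩
      exact ⟨a, ha, b, hb, hab⟩
    exact hab (Ca_inj (hS a ha) (hS b hb) (hid (hV a ha) (hV b hb)))
  | succ k ih =>
    intro S V hS hV hid
    rcases hid with hsub | ⟨q, hq⟩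
    · -- subsingleton: card ≤ 1
      by_contra hc
      push_neg at hc
      obtain ⟨a, ha, b, hb, hab⟩ : ∃ a ∈ S, ∃ b ∈ S, a ≠ b := by
        rcases Finset.one_lt_card.mp (by omega : 1 < S.card) with ⟨a, ha, b, hb, hab⟩
        exact ⟨a, ha, b, hb, hab⟩
      exact hab (Ca_inj (hS a ha) (hS b hb) (hsub (hV a ha) (hV b hb)))
    · -- learner queries q : Fin m → Bool
      by_cases h0 : q 0 = false
      · -- eliminate at most the candidate q
        rcases Finset.eq_empty_or_nonempty (S.erase q) with he | ⟨a, ha⟩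
        · have : S.card ≤ 1 := by
            rcases Finset.eq_empty_or_nonempty S with h | ⟨s, hs⟩
            · simp [h]
            · have hsub : S ⊆ {q} := by
                intro t ht
                by_contra htq
                exact (Finset.ne_empty_of_mem
                  (Finset.mem_erase.mpr ⟨by simpa using htq, ht⟩)) he
              simpa using Finset.card_le_card hsub
          omega
        · have haS : a ∈ S := Finset.mem_of_mem_erase ha
          have haq : a ≠ q := Finset.ne_of_mem_erase ha
          have ha0 := hS a haS
          have hCaq : Ca a q = false := by simp [Ca, h0, Ne.symm haq, haq]
          have hCaf : Ca a (flip0 q) = true := by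
            simp [Ca, flip0_zero, h0]
          have hmem : flip0 q ∈ CSmin dH q (Ca a) :=
            flip0_mem_CSmin _ _ (by rw [hCaq, hCaf]; simp)
          have hid' := ((hq (Ca a) (hV a haS)).2 (flip0 q) hmem)
          have := ih (S.erase q) _ (fun b hb => hS b (Finset.mem_of_mem_erase hb))
            (fun b hb => by
              have hbS := Finset.mem_of_mem_erase hb
              have hbq : b ≠ q := Finset.ne_of_mem_erase hb
              have hb0 := hS b hbS
              have hCbq : Ca b q = false := by simp [Ca, h0, hbq, Ne.symm hbq]
              have hCbf : Ca b (flip0 q) = true := by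
                simp [Ca, flip0_zero, h0]
              exact ⟨hV b hbS, by simp [hCbq, hCaq], 
                flip0_mem_CSmin _ _ (by rw [hCbq, hCbf]; simp), by rw [hCbf, hCaf]⟩)
            hid'
          have hcard := Finset.pred_card_le_card_erase (s := S) (a := q)
          omega
      · -- q 0 = true : eliminate at most candidate flip0 q
        replace h0 : q 0 = true := by cases hq0 : q 0 <;> simp_all
        rcases Finset.eq_empty_or_nonempty (S.erase (flip0 q)) with he | ⟨a, ha⟩
        · have : S.card ≤ 1 := by
            rcases Finset.eq_empty_or_nonempty S with h | ⟨s, hs⟩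
            · simp [h]
            · have hsub : S ⊆ {flip0 q} := by
                intro t ht
                by_contra htq
                exact (Finset.ne_empty_of_mem
                  (Finset.mem_erase.mpr ⟨by simpa using htq, ht⟩)) he
              simpa using Finset.card_le_card hsub
          omega
        · have haS : a ∈ S := Finset.mem_of_mem_erase ha
          have haq : a ≠ flip0 q := Finset.ne_of_mem_erase ha
          have ha0 := hS a haS
          have hCaq : Ca a q = true := by simp [Ca, h0]
          have hCaf : Ca a (flip0 q) = false := by
            simp [Ca, flip0_zero, h0, Ne.symm haq, haq]
          have hmem : flip0 q ∈ CSmin dH q (Ca a) :=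
            flip0_mem_CSmin _ _ (by rw [hCaq, hCaf]; simp)
          have hid' := ((hq (Ca a) (hV a haS)).2 (flip0 q) hmem)
          have := ih (S.erase (flip0 q)) _
            (fun b hb => hS b (Finset.mem_of_mem_erase hb))
            (fun b hb => by
              have hbS := Finset.mem_of_mem_erase hb
              have hbq : b ≠ flip0 q := Finset.ne_of_mem_erase hb
              have hb0 := hS b hbS
              have hCbq : Ca b q = true := by simp [Ca, h0]
              have hCbf : Ca b (flip0 q) = false := by
                simp [Ca, flip0_zero, h0, hbq, Ne.symm hbq]
              exact ⟨hV b hbS, by simp [hCbq, hCaq],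
                flip0_mem_CSmin _ _ (by rw [hCbq, hCbf]; simp), by rw [hCbf, hCaf]⟩)
            hid'
          have hcard := Finset.pred_card_le_card_erase (s := S) (a := flip0 q)
          omega

end Aux

section DLmem

variable {m : ℕ} [NeZero m]

lemma evalDL_allfalse (a x : Fin m → Bool) :
    ∀ l : List (Fin m),
    evalDL (l.map fun i => ((i, !a i), false)) true x = decide (∀ i ∈ l, x i = a i) := by
  intro l
  induction l with
  | nil => simp [evalDL]
  | cons i l ih =>
    simp only [List.map_cons, evalDL, ih]
    by_cases h : x i = !a i
    · have : ¬ (x i = a i) := by cases hxi : x i <;> cases hai : a i <;> simp_all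
      simp [h, this]
    · have : x i = a i := by cases hxi : x i <;> cases hai : a i <;> simp_all
      simp [h, this]

lemma countAlt_false_append (l : List Bool) (h : ∀ b ∈ l, b = false) :
    countAlt (false :: l ++ [true]) = 1 := by
  induction l with
  | nil => simp [countAlt]
  | cons b l ih =>
    have hb : b = false := h b (by simp)
    subst hb
    have : countAlt (false :: l ++ [true]) = 1 := ih (fun b hb => h b (by simp [hb]))
    simpa [countAlt] using this

lemma countAlt_true_head (l : List Bool) (hall : ∀ b ∈ l, b = false)
    (hne : l ≠ []) : countAlt (true :: l ++ [true]) ≤ 2 := by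
  obtain ⟨b, l', rfl⟩ := List.exists_cons_of_ne_nil hne
  have hb : b = false := hall b (by simp)
  subst hb
  have h1 : countAlt (false :: l' ++ [true]) = 1 :=
    countAlt_false_append l' (fun c hc => hall c (by simp [hc]))
  have h2 : countAlt (true :: (false :: l') ++ [true]) =
      1 + countAlt (false :: l' ++ [true]) := by
    simp [countAlt]
  omega

lemma Ca_mem_DLk (hm : 3 ≤ m) (a : Fin m → Bool) (ha : a 0 = false) :
    Ca a ∈ DLk m 2 := by
  classical
  refine ⟨(((0 : Fin m), true), true) ::
    ((List.finRange m).filter (fun i => i ≠ 0)).map (fun i => ((i, !a i), false)),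
    true, ?_, ?_, ?_⟩
  · -- Nodup of variables
    simp only [List.map_cons, List.map_map]
    have : ((List.finRange m).filter (fun i => i ≠ 0)).map
        ((fun t : (Fin m × Bool) × Bool => t.1.1) ∘ (fun i => ((i, !a i), false)))
        = (List.finRange m).filter (fun i => i ≠ 0) := by
      simp [Function.comp_def]
    rw [this]
    refine List.nodup_cons.mpr ⟨?_, (List.nodup_finRange m).filter _⟩
    simp
  · -- alternation count ≤ 2
    simp only [List.map_cons, List.map_map, List.cons_append]
    set l := ((List.finRange m).filter (fun i => i ≠ 0)).map
      (Prod.snd ∘ (fun i : Fin m => ((i, !a i), false))) with hl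
    have hall : ∀ b ∈ l, b = false := by
      intro b hb
      rw [hl] at hb
      simp at hb
      exact hb.2
    have hne : l ≠ [] := by
      have h1 : (⟨1, by omega⟩ : Fin m) ∈ (List.finRange m).filter (fun i => i ≠ 0) := by
        refine List.mem_filter.mpr ⟨List.mem_finRange _, ?_⟩
        simp [Fin.ext_iff]
      intro hnil
      rw [hl] at hnil
      have h2 := List.map_eq_nil_iff.mp hnil
      rw [h2] at h1
      exact List.not_mem_nil h1
    exact countAlt_true_head l hall hne
  · -- evaluation agrees with Ca
    funext x
    simp only [evalDL]
    by_cases h0 : x 0 = true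
    · simp [Ca, h0]
    · replace h0 : x 0 = false := by cases hx : x 0 <;> simp_all
      rw [if_neg (by simp [h0])]
      rw [evalDL_allfalse]
      have hiff : (∀ i ∈ (List.finRange m).filter (fun i => i ≠ 0), x i = a i) ↔ x = a := by
        constructor
        · intro h
          funext i
          by_cases hi : i = 0
          · rw [hi, h0, ha]
          · exact h i (List.mem_filter.mpr ⟨List.mem_finRange _, by simp [hi]⟩)
        · intro h i _
          rw [h]
      rw [show Ca a x = decide (x = a) by simp [Ca, h0]]
      exact (decide_eq_decide.mpr hiff).symm

end DLmem

theorem statement15' (m : ℕ) (hm : 3 ≤ m) :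
    ((2 ^ (m - 2) - 1 : ℕ) : ℕ∞) ≤ Smin (fun a b => ((hammingDist a b : ℕ) : ℝ≥0)) (DLk m 2) := by
  classical
  haveI : NeZero m := ⟨by omega⟩
  rw [Smin, sampleComplexity]
  refine le_sInf ?_
  rintro n ⟨k, rfl, hid⟩
  rw [Nat.cast_le]
  -- the set S of all a with a 0 = false
  set S : Finset (Fin m → Bool) := Finset.univ.filter (fun a => a 0 = false) with hSdef
  have hcard : 2 ^ (m - 1) ≤ S.card := by
    obtain ⟨n', rfl⟩ : ∃ n', m = n' + 3 := ⟨m - 3, by omega⟩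
    have hinj : Set.InjOn (fun b : Fin (n' + 2) → Bool => (Fin.cons false b : Fin (n' + 3) → Bool))
        ↑(Finset.univ : Finset (Fin (n' + 2) → Bool)) := by
      intro b1 _ b2 _ h
      have := congrArg Fin.tail h
      simpa [Fin.tail_cons] using this
    have hmaps : ∀ b ∈ (Finset.univ : Finset (Fin (n' + 2) → Bool)),
        (Fin.cons false b : Fin (n' + 3) → Bool) ∈ S := by
      intro b _
      simp [hSdef]
    have := Finset.card_le_card_of_injOn _ hmaps hinj
    calc 2 ^ (n' + 3 - 1) = Fintype.card (Fin (n' + 2) → Bool) := by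
          simp [Fintype.card_fun]
      _ = (Finset.univ : Finset (Fin (n' + 2) → Bool)).card := rfl
      _ ≤ S.card := this
  have hkey := key k S (DLk m 2)
    (fun a ha => (Finset.mem_filter.mp ha).2)
    (fun a ha => Ca_mem_DLk hm a (Finset.mem_filter.mp ha).2)
    (by exact hid)
  have h2 : 2 ^ (m - 2) ≤ 2 ^ (m - 1) := Nat.pow_le_pow_right (by omega) (by omega)
  omega


/-- For every `m ≥ 3`,
`S^d_min(DL²_m) ≥ 2^{m−2} − 1`, with `d` the Hamming distance. -/
theorem statement15 (m : ℕ) (hm : 3 ≤ m) :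
    ((2 ^ (m - 2) - 1 : ℕ) : ℕ∞) ≤ Smin (fun a b => ((hammingDist a b : ℕ) : ℝ≥0)) (DLk m 2) := by
  exact statement15' m hm
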